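/- With the pointwise warped-product curvature data of the setup, and reals L₁, L₂: if R·R = L₁ Q(g,R) + L₂ Q(S,R) holds on V (all operations taken with respect to g), then on V̄ one has R̄·T = L₁ Q(ḡ,T) + L₂ Q(S̄,T). -/

import Mathlib

/- Pointwise algebraic operations used for pseudosymmetry-type curvature conditions. -/
namespace WPS

variable {V : Type} [AddCommGroup V] [Module ℝ V]

/-- The endomorphism `X ∧_A Y` given by `(X ∧_A Y) Z = A(Y,Z) X - A(X,Z) Y`. -/
def wedge (A : V → V → ℝ) (X Y Z : V) : V := A Y Z • X - A X Z • Y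

/-- `(D · H)(X₁,X₂,X₃,X₄; X,Y)` for a (0,4)-tensor `H`, where `Dop X Y` is the
curvature operator `𝒟(X,Y)` of `D`. -/
def dot4 (Dop : V → V → V → V) (H : V → V → V → V → ℝ)
    (X1 X2 X3 X4 X Y : V) : ℝ :=
  -H (Dop X Y X1) X2 X3 X4 - H X1 (Dop X Y X2) X3 X4
    - H X1 X2 (Dop X Y X3) X4 - H X1 X2 X3 (Dop X Y X4)

/-- `(D · H)(X₁,X₂; X,Y)` for a (0,2)-tensor `H`. -/
def dot2 (Dop : V → V → V → V) (H : V → V → ℝ) (X1 X2 X Y : V) : ℝ :=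
  -H (Dop X Y X1) X2 - H X1 (Dop X Y X2)

/-- The Tachibana operator `Q(A,H)` for a (0,4)-tensor `H`. -/
def Q4 (A : V → V → ℝ) (H : V → V → V → V → ℝ) :
    V → V → V → V → V → V → ℝ := dot4 (wedge A) H

/-- The Tachibana operator `Q(A,H)` for a (0,2)-tensor `H`. -/
def Q2 (A : V → V → ℝ) (H : V → V → ℝ) : V → V → V → V → ℝ := dot2 (wedge A) H

/-- Symmetric bilinear form (as a bare function). -/
def SymBilin (A : V → V → ℝ) : Prop :=
  (∀ x y, A x y = A y x) ∧ ∀ y, IsLinearMap ℝ fun x => A x y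

/-- Nondegeneracy of a bilinear form. -/
def Nondeg (g : V → V → ℝ) : Prop := ∀ x, (∀ y, g x y = 0) → x = 0

/-- Algebraic curvature tensor: multilinear, with the antisymmetries, pair symmetry
and first Bianchi identity of a Riemann curvature tensor. -/
def Curv (R : V → V → V → V → ℝ) : Prop :=
  (∀ y z w, IsLinearMap ℝ fun x => R x y z w) ∧
  (∀ x z w, IsLinearMap ℝ fun y => R x y z w) ∧
  (∀ x y w, IsLinearMap ℝ fun z => R x y z w) ∧
  (∀ x y z, IsLinearMap ℝ fun w => R x y z w) ∧
  (∀ x y z w, R x y z w = -R y x z w) ∧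
  (∀ x y z w, R x y z w = -R x y w z) ∧
  (∀ x y z w, R x y z w = R z w x y) ∧
  ∀ x y z w, R x y z w + R y z x w + R z x y w = 0

/-- The Gaussian-type tensor `G(x,y,z,w) = g(x,w) g(y,z) - g(x,z) g(y,w)`. -/
def Gten (g : V → V → ℝ) (x y z w : V) : ℝ := g x w * g y z - g x z * g y w

end WPS

theorem stmt4
    {Vb Vf : Type} [AddCommGroup Vb] [Module ℝ Vb] [FiniteDimensional ℝ Vb]
    [AddCommGroup Vf] [Module ℝ Vf] [FiniteDimensional ℝ Vf]
    (p q : ℕ) (hp : 1 ≤ p) (hq : 1 ≤ q) (hn : 3 ≤ p + q)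
    (hdb : Module.finrank ℝ Vb = p) (hdf : Module.finrank ℝ Vf = q)
    (gb : Vb → Vb → ℝ) (hgb : WPS.SymBilin gb) (hgbn : WPS.Nondeg gb)
    (gf : Vf → Vf → ℝ) (hgf : WPS.SymBilin gf) (hgfn : WPS.Nondeg gf)
    (f Δ : ℝ) (hf : 0 < f)
    (T : Vb → Vb → ℝ) (hT : WPS.SymBilin T)
    (Tsh : Vb →ₗ[ℝ] Vb) (hTsh : ∀ x y, gb (Tsh x) y = T x y)
    (Ω : ℝ) (hΩ : Ω = -f * (((q : ℝ) - 1) * Δ + LinearMap.trace ℝ Vb Tsh))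
    (Rb : Vb → Vb → Vb → Vb → ℝ) (hRb : WPS.Curv Rb)
    (Rf : Vf → Vf → Vf → Vf → ℝ) (hRf : WPS.Curv Rf)
    (Rbop : Vb → Vb → Vb → Vb) (hRbop : ∀ x y z w, gb (Rbop x y z) w = Rb x y z w)
    (Rfop : Vf → Vf → Vf → Vf) (hRfop : ∀ x y z w, gf (Rfop x y z) w = Rf x y z w)
    (Sb : Vb → Vb → ℝ)
    (hSb : ∀ y z, ∃ E : Vb →ₗ[ℝ] Vb, (∀ x w, gb (E x) w = Rb x y z w) ∧
      Sb y z = LinearMap.trace ℝ Vb E)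
    (Sf : Vf → Vf → ℝ)
    (hSf : ∀ y z, ∃ E : Vf →ₗ[ℝ] Vf, (∀ x w, gf (E x) w = Rf x y z w) ∧
      Sf y z = LinearMap.trace ℝ Vf E)
    (κf : ℝ)
    (hκf : ∃ E : Vf →ₗ[ℝ] Vf, (∀ x y, gf (E x) y = Sf x y) ∧
      κf = LinearMap.trace ℝ Vf E)
    (gV : Vb × Vf → Vb × Vf → ℝ)
    (hgV : ∀ X Y, gV X Y = gb X.1 Y.1 + f * gf X.2 Y.2)
    (RV : Vb × Vf → Vb × Vf → Vb × Vf → Vb × Vf → ℝ)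
    (hRV : ∀ X Y Z W, RV X Y Z W = Rb X.1 Y.1 Z.1 W.1
      + f * (T X.1 Z.1 * gf Y.2 W.2 + T Y.1 W.1 * gf X.2 Z.2
        - T X.1 W.1 * gf Y.2 Z.2 - T Y.1 Z.1 * gf X.2 W.2)
      + f * Rf X.2 Y.2 Z.2 W.2 - f ^ 2 * Δ * WPS.Gten gf X.2 Y.2 Z.2 W.2)
    (SV : Vb × Vf → Vb × Vf → ℝ)
    (hSV : ∀ X Y, SV X Y = (Sb X.1 Y.1 - (q : ℝ) * T X.1 Y.1)
      + (Sf X.2 Y.2 + Ω * gf X.2 Y.2))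
    (Rop : Vb × Vf → Vb × Vf → Vb × Vf → Vb × Vf)
    (hRop : ∀ X Y Z W, gV (Rop X Y Z) W = RV X Y Z W)
    (L1 L2 : ℝ)
    (hmain : (∀ X1 X2 X3 X4 X Y : Vb × Vf, WPS.dot4 Rop RV X1 X2 X3 X4 X Y
      = L1 * WPS.Q4 gV RV X1 X2 X3 X4 X Y + L2 * WPS.Q4 SV RV X1 X2 X3 X4 X Y)) :
    ∀ x y u v : Vb, WPS.dot2 Rbop T x y u v
      = L1 * WPS.Q2 gb T x y u v + L2 * WPS.Q2 Sb T x y u v := by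
  intro x y u v
  obtain ⟨hTsymm, hTlin⟩ := hT
  obtain ⟨hgbsymm, hgblin⟩ := hgb
  obtain ⟨hgfsymm, hgflin⟩ := hgf
  -- zero lemmas
  have hT0l : ∀ z : Vb, T 0 z = 0 := fun z => (hTlin z).map_zero
  have hT0r : ∀ z : Vb, T z 0 = 0 := fun z => by rw [hTsymm]; exact hT0l z
  have hgb0l : ∀ z : Vb, gb 0 z = 0 := fun z => (hgblin z).map_zero
  have hgb0r : ∀ z : Vb, gb z 0 = 0 := fun z => by rw [hgbsymm]; exact hgb0l z
  have hgf0l : ∀ z : Vf, gf 0 z = 0 := fun z => (hgflin z).map_zero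
  have hgf0r : ∀ z : Vf, gf z 0 = 0 := fun z => by rw [hgfsymm]; exact hgf0l z
  have hRb1 : ∀ b c d : Vb, Rb 0 b c d = 0 := fun b c d => (hRb.1 b c d).map_zero
  have hRb2 : ∀ a c d : Vb, Rb a 0 c d = 0 := fun a c d => (hRb.2.1 a c d).map_zero
  have hRb3 : ∀ a b d : Vb, Rb a b 0 d = 0 := fun a b d => (hRb.2.2.1 a b d).map_zero
  have hRb4 : ∀ a b c : Vb, Rb a b c 0 = 0 := fun a b c => (hRb.2.2.2.1 a b c).map_zero
  have hRf1 : ∀ b c d : Vf, Rf 0 b c d = 0 := fun b c d => (hRf.1 b c d).map_zero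
  have hRf2 : ∀ a c d : Vf, Rf a 0 c d = 0 := fun a c d => (hRf.2.1 a c d).map_zero
  have hSb0l : ∀ z : Vb, Sb 0 z = 0 := by
    intro z
    obtain ⟨E, hE, htr⟩ := hSb 0 z
    have hE0 : E = 0 := by
      apply LinearMap.ext
      intro a
      rw [LinearMap.zero_apply]
      apply hgbn
      intro w
      rw [hE, hRb2]
    rw [htr, hE0, map_zero]
  have hSb0r : ∀ z : Vb, Sb z 0 = 0 := by
    intro z
    obtain ⟨E, hE, htr⟩ := hSb z 0
    have hE0 : E = 0 := by
      apply LinearMap.ext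
      intro a
      rw [LinearMap.zero_apply]
      apply hgbn
      intro w
      rw [hE, hRb3]
    rw [htr, hE0, map_zero]
  have hSf0l : ∀ z : Vf, Sf 0 z = 0 := by
    intro z
    obtain ⟨E, hE, htr⟩ := hSf 0 z
    have hE0 : E = 0 := by
      apply LinearMap.ext
      intro a
      rw [LinearMap.zero_apply]
      apply hgfn
      intro w
      rw [hE, hRf2]
    rw [htr, hE0, map_zero]
  -- RV evaluation lemmas
  have hRV2zero : ∀ X Z W : Vb × Vf, RV X 0 Z W = 0 := by
    intro X Z W
    rw [hRV]
    simp [WPS.Gten, hRb2, hRf2, hT0l, hgf0l]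
  have hRV4zero : ∀ X Y Z : Vb × Vf, RV X Y Z 0 = 0 := by
    intro X Y Z
    rw [hRV]
    simp [WPS.Gten, hRb4, (hRf.2.2.2.1 X.2 Y.2 Z.2).map_zero, hT0r, hgf0r]
  have hRVmix : ∀ (a b : Vb) (ξ η : Vf),
      RV (a, 0) (0, ξ) (b, 0) (0, η) = f * (T a b * gf ξ η) := by
    intro a b ξ η
    rw [hRV]
    simp [WPS.Gten, hRb2, hRf1, hT0l, hT0r, hgf0l, hgf0r]
  -- nondegeneracy of gV
  have hgVext : ∀ a b : Vb × Vf, (∀ W, gV a W = gV b W) → a = b := by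
    intro a b h
    have h1 : a.1 = b.1 := by
      have hz : ∀ w : Vb, gb (a.1 - b.1) w = 0 := by
        intro w
        have := h (w, 0)
        rw [hgV, hgV, hgf0r, hgf0r] at this
        rw [(hgblin w).map_sub]
        linarith
      have := hgbn _ hz
      exact sub_eq_zero.mp this
    have h2 : a.2 = b.2 := by
      have hz : ∀ w : Vf, gf (a.2 - b.2) w = 0 := by
        intro w
        have := h (0, w)
        rw [hgV, hgV, hgb0r, hgb0r] at this
        have hff : gf a.2 w = gf b.2 w := by
          have hfne : f ≠ 0 := ne_of_gt hf
          have h3 : f * gf a.2 w = f * gf b.2 w := by linarith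
          exact mul_left_cancel₀ hfne h3
        rw [(hgflin w).map_sub, hff]
        ring
      have := hgfn _ hz
      exact sub_eq_zero.mp this
    exact Prod.ext h1 h2
  -- values of Rop
  have hRopbb : ∀ z : Vb, Rop (u, 0) (v, 0) (z, 0) = (Rbop u v z, 0) := by
    intro z
    apply hgVext
    intro W
    rw [hRop, hRV, hgV]
    simp [WPS.Gten, hRbop, hRf1, hT0r, hgf0l, hgf0r]
  have hRopbf : ∀ ζ : Vf, Rop (u, 0) (v, 0) (0, ζ) = 0 := by
    intro ζ
    apply hgVext
    intro W
    rw [hRop, hRV, hgV]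
    simp [WPS.Gten, hRb3, hRf1, hT0r, hgb0l, hgf0l, hgf0r]
  -- values of wedges
  have hwgVb : ∀ z : Vb, WPS.wedge gV (u, 0) (v, 0) (z, 0) = (WPS.wedge gb u v z, 0) := by
    intro z
    unfold WPS.wedge
    rw [hgV, hgV]
    simp [hgf0r, Prod.smul_mk, Prod.mk_sub_mk]
  have hwgVf : ∀ ζ : Vf, WPS.wedge gV (u, 0) (v, 0) (0, ζ) = 0 := by
    intro ζ
    unfold WPS.wedge
    rw [hgV, hgV]
    simp [hgb0r, hgf0l]
  have hwSVb : ∀ z : Vb, WPS.wedge SV (u, 0) (v, 0) (z, 0)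
      = (WPS.wedge (fun a b => Sb a b - (q : ℝ) * T a b) u v z, 0) := by
    intro z
    unfold WPS.wedge
    rw [hSV, hSV]
    simp [hSf0l, hgf0l, Prod.smul_mk, Prod.mk_sub_mk]
  have hwSVf : ∀ ζ : Vf, WPS.wedge SV (u, 0) (v, 0) (0, ζ) = 0 := by
    intro ζ
    unfold WPS.wedge
    rw [hSV, hSV]
    simp [hSb0r, hT0r, hSf0l, hgf0l]
  -- pick ξ, η with gf ξ η ≠ 0
  have hnt : Nontrivial Vf := by
    have : 0 < Module.finrank ℝ Vf := by rw [hdf]; exact hq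
    exact Module.finrank_pos_iff.mp this
  obtain ⟨ξ, hξ⟩ := exists_ne (0 : Vf)
  have hex : ∃ η, gf ξ η ≠ 0 := by
    by_contra h
    push_neg at h
    exact hξ (hgfn ξ h)
  obtain ⟨η, hη⟩ := hex
  -- specialize the main hypothesis
  have key := hmain (x, 0) (0, ξ) (y, 0) (0, η) (u, 0) (v, 0)
  set c : ℝ := f * gf ξ η with hc
  have hcne : c ≠ 0 := mul_ne_zero (ne_of_gt hf) hη
  have hL : WPS.dot4 Rop RV (x, 0) (0, ξ) (y, 0) (0, η) (u, 0) (v, 0)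
      = c * WPS.dot2 Rbop T x y u v := by
    unfold WPS.dot4 WPS.dot2
    rw [hRopbb x, hRopbb y, hRopbf ξ, hRopbf η]
    rw [hRVmix, hRVmix, hRV2zero, hRV4zero]
    ring
  have hQg : WPS.Q4 gV RV (x, 0) (0, ξ) (y, 0) (0, η) (u, 0) (v, 0)
      = c * WPS.Q2 gb T x y u v := by
    unfold WPS.Q4 WPS.Q2 WPS.dot4 WPS.dot2
    rw [hwgVb x, hwgVb y, hwgVf ξ, hwgVf η]
    rw [hRVmix, hRVmix, hRV2zero, hRV4zero]
    ring
  have hTw : ∀ (B : Vb → Vb → ℝ) (z w : Vb),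
      T (WPS.wedge B u v z) w = B v z * T u w - B u z * T v w := by
    intro B z w
    unfold WPS.wedge
    rw [(hTlin w).map_sub, (hTlin w).map_smul, (hTlin w).map_smul]
    simp [smul_eq_mul]
  have hQS : WPS.Q4 SV RV (x, 0) (0, ξ) (y, 0) (0, η) (u, 0) (v, 0)
      = c * WPS.Q2 Sb T x y u v := by
    unfold WPS.Q4 WPS.Q2 WPS.dot4 WPS.dot2
    rw [hwSVb x, hwSVb y, hwSVf ξ, hwSVf η]
    rw [hRVmix, hRVmix, hRV2zero, hRV4zero]
    rw [hTw, hTw, hTsymm x, hTsymm x, hTw, hTw]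
    rw [hTsymm u x, hTsymm v x, hTsymm u y, hTsymm v y]
    ring
  rw [hL, hQg, hQS] at key
  have : c * WPS.dot2 Rbop T x y u v
      = c * (L1 * WPS.Q2 gb T x y u v + L2 * WPS.Q2 Sb T x y u v) := by
    rw [key]; ring
  exact mul_left_cancel₀ hcne this
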